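/- Let Y ⊆ R^{m×n} be the polytope defined by: for each i, ∑_{j=1}^n y_{ij} = 1; for each i = 1,...,m-1 and j = 1,...,n-1, ∑_{l=1}^j y_{il} - ∑_{l=1}^j y_{i+1,l} ≥ 0; and y_{ij} ≥ 0 for all i,j. Then every vertex (extreme point) of Y has all coordinates in {0,1}. -/

import Mathlib

open Finset

/-- The threading polytope `Y ⊆ ℝ^{m×n}`: each row sums to 1, prefix sums of consecutive
rows are ordered, and all entries are nonnegative. -/
def threadingPolytope (m n : ℕ) : Set (Fin m → Fin n → ℝ) :=
  {y | (∀ i, ∑ j, y i j = 1) ∧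
       (∀ (i : Fin m) (hi : (i : ℕ) + 1 < m) (j : Fin n), (j : ℕ) + 1 < n →
         ∑ l ∈ Finset.univ.filter (· ≤ j), y ⟨(i : ℕ) + 1, hi⟩ l ≤
           ∑ l ∈ Finset.univ.filter (· ≤ j), y i l) ∧
       (∀ i j, 0 ≤ y i j)}

noncomputable section ThreadAux


/-- Prefix sum of a `Fin n`-indexed vector up to (exclusive) natural cutoff `k`. -/
def pS {n : ℕ} (v : Fin n → ℝ) (k : ℕ) : ℝ :=
  ∑ l ∈ Finset.univ.filter (fun l : Fin n => (l : ℕ) < k), v l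

lemma pS_zero {n : ℕ} (v : Fin n → ℝ) : pS v 0 = 0 := by
  simp [pS]

lemma pS_succ {n : ℕ} (v : Fin n → ℝ) {k : ℕ} (hk : k < n) :
    pS v (k + 1) = pS v k + v ⟨k, hk⟩ := by
  unfold pS
  have hset : Finset.univ.filter (fun l : Fin n => (l : ℕ) < k + 1) =
      insert ⟨k, hk⟩ (Finset.univ.filter (fun l : Fin n => (l : ℕ) < k)) := by
    ext l
    simp [Fin.ext_iff]
    omega
  rw [hset, Finset.sum_insert (by simp)]
  ring

lemma pS_top {n : ℕ} (v : Fin n → ℝ) : pS v n = ∑ l, v l := by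
  unfold pS
  congr 1
  ext l
  simp [l.isLt]

lemma pS_add_mul {n : ℕ} (v w : Fin n → ℝ) (c : ℝ) (k : ℕ) :
    pS (fun j => v j + c * w j) k = pS v k + c * pS w k := by
  unfold pS
  rw [Finset.sum_add_distrib, Finset.mul_sum]

lemma filter_le_eq {n : ℕ} (j : Fin n) :
    (Finset.univ.filter (· ≤ j)) =
      Finset.univ.filter (fun l : Fin n => (l : ℕ) < (j : ℕ) + 1) := by
  ext l
  simp only [Finset.mem_filter, Finset.mem_univ, true_and, Fin.le_def, Nat.lt_succ_iff]

/-- Indicator of prefix sums equal to the level `t`. -/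
def chi {m n : ℕ} (y : Fin m → Fin n → ℝ) (t : ℝ) (i : Fin m) (k : ℕ) : ℝ :=
  if pS (y i) k = t then 1 else 0

/-- Perturbation direction whose prefix sums are `chi`. -/
def dd {m n : ℕ} (y : Fin m → Fin n → ℝ) (t : ℝ) (i : Fin m) (j : Fin n) : ℝ :=
  chi y t i ((j : ℕ) + 1) - chi y t i (j : ℕ)

lemma chi_01 {m n : ℕ} (y : Fin m → Fin n → ℝ) (t : ℝ) (i : Fin m) (k : ℕ) :
    chi y t i k = 0 ∨ chi y t i k = 1 := by
  unfold chi; split <;> simp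

lemma chi_congr {m n : ℕ} (y : Fin m → Fin n → ℝ) (t : ℝ) {i i' : Fin m} {k k' : ℕ}
    (h : pS (y i) k = pS (y i') k') : chi y t i k = chi y t i' k' := by
  unfold chi; rw [h]

lemma chi_zero {m n : ℕ} (y : Fin m → Fin n → ℝ) {t : ℝ} (ht0 : t ≠ 0) (i : Fin m) :
    chi y t i 0 = 0 := by
  unfold chi
  rw [pS_zero, if_neg (fun h => ht0 h.symm)]

lemma dd_tele {m n : ℕ} (y : Fin m → Fin n → ℝ) {t : ℝ} (ht0 : t ≠ 0) (i : Fin m) :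
    ∀ k, k ≤ n → pS (dd y t i) k = chi y t i k := by
  intro k
  induction k with
  | zero => intro _; rw [pS_zero, chi_zero y ht0]
  | succ k ih =>
    intro hk
    have hkn : k < n := hk
    rw [pS_succ _ hkn, ih (le_of_lt hkn)]
    show chi y t i k + dd y t i ⟨k, hkn⟩ = chi y t i (k + 1)
    unfold dd
    push_cast
    ring

/-- Gap of the ordering constraint. -/
def gp {m n : ℕ} (y : Fin m → Fin n → ℝ) (i : Fin m) (j : Fin n) : ℝ :=
  if h : (i : ℕ) + 1 < m then
    pS (y i) ((j : ℕ) + 1) - pS (y ⟨(i : ℕ) + 1, h⟩) ((j : ℕ) + 1)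
  else 1


lemma prefix01 {m n : ℕ} (y : Fin m → Fin n → ℝ)
    (hy : y ∈ Set.extremePoints ℝ (threadingPolytope m n))
    (i₀ : Fin m) (k₀ : ℕ) (hk₀ : k₀ ≤ n) :
    pS (y i₀) k₀ = 0 ∨ pS (y i₀) k₀ = 1 := by
  classical
  by_contra hcon
  push_neg at hcon
  obtain ⟨ht0, ht1⟩ := hcon
  obtain ⟨hyP, hseg⟩ := hy
  obtain ⟨hrow, hord, hpos⟩ := hyP
  set t : ℝ := pS (y i₀) k₀ with htdef
  have hχtop : ∀ i : Fin m, chi y t i n = 0 := by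
    intro i
    unfold chi
    rw [pS_top, hrow i, if_neg (fun h => ht1 h.symm)]
  -- the finite set of relevant slacks
  set B : Finset ℝ :=
    insert 1 (((((Finset.univ : Finset (Fin m × Fin n)).image fun p => y p.1 p.2) ∪
      ((Finset.univ : Finset (Fin m × Fin n)).image fun p => gp y p.1 p.2))).filter
        fun x => 0 < x) with hBdef
  have hB1 : (1 : ℝ) ∈ B := Finset.mem_insert_self _ _
  set ε : ℝ := B.min' ⟨1, hB1⟩ with hεdef
  have hεpos : 0 < ε := by
    have hall : ∀ x ∈ B, 0 < x := by
      intro x hx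
      rw [hBdef] at hx
      rcases Finset.mem_insert.1 hx with h | h
      · rw [h]; norm_num
      · exact (Finset.mem_filter.1 h).2
    exact hall _ (B.min'_mem ⟨1, hB1⟩)
  have hεy : ∀ i j, 0 < y i j → ε ≤ y i j := by
    intro i j h
    refine Finset.min'_le _ _ ?_
    rw [hBdef]
    refine Finset.mem_insert_of_mem (Finset.mem_filter.2 ⟨?_, h⟩)
    exact Finset.mem_union_left _ (Finset.mem_image.2 ⟨(i, j), Finset.mem_univ _, rfl⟩)
  have hεgp : ∀ i j, 0 < gp y i j → ε ≤ gp y i j := by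
    intro i j h
    refine Finset.min'_le _ _ ?_
    rw [hBdef]
    refine Finset.mem_insert_of_mem (Finset.mem_filter.2 ⟨?_, h⟩)
    exact Finset.mem_union_right _ (Finset.mem_image.2 ⟨(i, j), Finset.mem_univ _, rfl⟩)
  -- the perturbed points are in the polytope
  have hmem : ∀ c : ℝ, |c| ≤ ε →
      (fun i j => y i j + c * dd y t i j) ∈ threadingPolytope m n := by
    intro c hc
    obtain ⟨hc1, hc2⟩ := abs_le.1 hc
    refine ⟨?_, ?_, ?_⟩
    · intro i
      show ∑ j, (y i j + c * dd y t i j) = 1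
      rw [← pS_top, pS_add_mul, pS_top (y i), hrow i, dd_tele y ht0 i n le_rfl,
        hχtop i, mul_zero, add_zero]
    · intro i hi j hj
      show ∑ l ∈ Finset.univ.filter (· ≤ j), (y ⟨(i : ℕ) + 1, hi⟩ l + c * dd y t ⟨(i : ℕ) + 1, hi⟩ l) ≤
        ∑ l ∈ Finset.univ.filter (· ≤ j), (y i l + c * dd y t i l)
      rw [filter_le_eq]
      have hjn : (j : ℕ) + 1 ≤ n := le_of_lt hj
      have e1 : ∀ i' : Fin m,
          (∑ l ∈ Finset.univ.filter (fun l : Fin n => (l : ℕ) < (j : ℕ) + 1),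
            (y i' l + c * dd y t i' l)) = pS (y i') ((j : ℕ) + 1) + c * chi y t i' ((j : ℕ) + 1) := by
        intro i'
        rw [← dd_tele y ht0 i' ((j : ℕ) + 1) hjn, ← pS_add_mul]
        rfl
      rw [e1, e1]
      have hab : pS (y ⟨(i : ℕ) + 1, hi⟩) ((j : ℕ) + 1) ≤ pS (y i) ((j : ℕ) + 1) := by
        have h2 := hord i hi j hj
        rw [filter_le_eq] at h2
        exact h2
      by_cases heq : pS (y ⟨(i : ℕ) + 1, hi⟩) ((j : ℕ) + 1) = pS (y i) ((j : ℕ) + 1)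
      · rw [chi_congr y t heq, heq]
      · have hlt : pS (y ⟨(i : ℕ) + 1, hi⟩) ((j : ℕ) + 1) < pS (y i) ((j : ℕ) + 1) :=
          lt_of_le_of_ne hab heq
        have hg : gp y i j = pS (y i) ((j : ℕ) + 1) - pS (y ⟨(i : ℕ) + 1, hi⟩) ((j : ℕ) + 1) :=
          dif_pos hi
        have hεg : ε ≤ pS (y i) ((j : ℕ) + 1) - pS (y ⟨(i : ℕ) + 1, hi⟩) ((j : ℕ) + 1) := by
          have := hεgp i j (by rw [hg]; linarith)
          rwa [hg] at this
        rcases chi_01 y t ⟨(i : ℕ) + 1, hi⟩ ((j : ℕ) + 1) with h2 | h2 <;>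
          rcases chi_01 y t i ((j : ℕ) + 1) with h1 | h1 <;> rw [h1, h2] <;> linarith
    · intro i j
      show 0 ≤ y i j + c * dd y t i j
      by_cases hχe : chi y t i ((j : ℕ) + 1) = chi y t i (j : ℕ)
      · have hdz : dd y t i j = 0 := by unfold dd; rw [hχe]; ring
        rw [hdz, mul_zero, add_zero]; exact hpos i j
      · have hne : pS (y i) ((j : ℕ) + 1) ≠ pS (y i) (j : ℕ) := fun h => hχe (chi_congr y t h)
        have hstep : pS (y i) ((j : ℕ) + 1) = pS (y i) (j : ℕ) + y i j := by
          have h3 := pS_succ (y i) j.isLt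
          simpa using h3
        have hypos : 0 < y i j :=
          lt_of_le_of_ne (hpos i j) (fun h0 => hne (by rw [hstep, ← h0, add_zero]))
        have hεyij := hεy i j hypos
        rcases chi_01 y t i ((j : ℕ) + 1) with h1 | h1 <;>
          rcases chi_01 y t i (j : ℕ) with h2 | h2 <;> unfold dd <;> rw [h1, h2] <;> linarith
  -- the direction is nonzero
  have hdne : ∃ j : Fin n, dd y t i₀ j ≠ 0 := by
    by_contra hall
    push_neg at hall
    have hz : ∀ k, k ≤ n → chi y t i₀ k = 0 := by
      intro k
      induction k with
      | zero => intro _; exact chi_zero y ht0 i₀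
      | succ k ih =>
        intro hk
        have hkn : k < n := hk
        have h4 := hall ⟨k, hkn⟩
        unfold dd at h4
        have h5 : chi y t i₀ (k + 1) = chi y t i₀ k := by
          push_cast at h4
          linarith [sub_eq_zero.1 h4]
        rw [h5, ih (le_of_lt hkn)]
    have h1 : chi y t i₀ k₀ = 1 := by
      unfold chi
      rw [if_pos htdef.symm]
    rw [hz k₀ hk₀] at h1
    norm_num at h1
  obtain ⟨j₁, hj₁⟩ := hdne
  -- y is the midpoint of two distinct points of the polytope
  have hzp := hmem ε (by rw [abs_of_pos hεpos])
  have hzm := hmem (-ε) (by rw [abs_neg, abs_of_pos hεpos])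
  have hmid : y ∈ openSegment ℝ (fun i j => y i j + ε * dd y t i j)
      (fun i j => y i j + (-ε) * dd y t i j) := by
    refine ⟨1/2, 1/2, by norm_num, by norm_num, by norm_num, ?_⟩
    funext i j
    show (1/2 : ℝ) * (y i j + ε * dd y t i j) + (1/2 : ℝ) * (y i j + (-ε) * dd y t i j) = y i j
    ring
  have hfin := (hseg hzp hzm hmid)
  have : y i₀ j₁ + ε * dd y t i₀ j₁ = y i₀ j₁ := congrFun (congrFun hfin i₀) j₁
  have : ε * dd y t i₀ j₁ = 0 := by linarith
  rcases mul_eq_zero.1 this with h | h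
  · exact absurd h (ne_of_gt hεpos)
  · exact hj₁ h

end ThreadAux

/-- Every vertex (extreme point) of the threading polytope `Y` has all coordinates
in `{0,1}`. -/
theorem threadingPolytope_extremePoints_zero_one (m n : ℕ)
    (y : Fin m → Fin n → ℝ)
    (hy : y ∈ Set.extremePoints ℝ (threadingPolytope m n)) :
    ∀ i j, y i j = 0 ∨ y i j = 1 := by
  intro i j
  have hpos : ∀ i j, 0 ≤ y i j := hy.1.2.2
  have h0 := prefix01 y hy i (j : ℕ) (le_of_lt j.isLt)
  have h1 := prefix01 y hy i ((j : ℕ) + 1) j.isLt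
  have hstep : pS (y i) ((j : ℕ) + 1) = pS (y i) (j : ℕ) + y i j := by
    have h2 := pS_succ (y i) j.isLt
    simpa using h2
  have hnn : 0 ≤ y i j := hpos i j
  rcases h0 with h0 | h0 <;> rcases h1 with h1 | h1 <;> rw [h0, h1] at hstep
  · left; linarith
  · right; linarith
  · exfalso; linarith
  · left; linarith
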